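/- For either of the two tensor families of the Airy curve (the Eynard–Orantin tensors or the modified residue-constraint tensors), the recursively defined numbers vanish unless all indices are odd: S_{g,n; i₁,…,i_n} = 0 whenever some index i_m is even. -/

import Mathlib

namespace Airy

/-- The tensor `A` of the Airy curve: `a_{111} = 1/4`, all other components `0`. -/
noncomputable def aT (i j l : ℕ+) : ℂ := if i = 1 ∧ j = 1 ∧ l = 1 then 1/4 else 0

/-- The tensor `ε` of the Airy curve: `ε₃ = 1/16`, all other components `0`. -/
noncomputable def epsT (i : ℕ+) : ℂ := if i = 3 then 1/16 else 0

/-- The Eynard–Orantin `B`-tensor of the Airy curve. -/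
noncomputable def bTR (i j l : ℕ+) : ℂ :=
  if Odd (i : ℕ) ∧ (i : ℕ) + (j : ℕ) = (l : ℕ) + 3 then
    (1/4) * (-1 : ℂ) ^ ((j : ℕ) + 1) * (j : ℕ) else 0

/-- The Eynard–Orantin `C`-tensor of the Airy curve. -/
noncomputable def cTR (i j l : ℕ+) : ℂ :=
  if Even ((j : ℕ) + (l : ℕ)) ∧ (i : ℕ) = (j : ℕ) + (l : ℕ) + 3 then
    (1/4) * (-1 : ℂ) ^ ((l : ℕ) + 1) else 0

/-- The modified (residue-constraint) `B`-tensor of the Airy curve. -/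
noncomputable def bM (i j l : ℕ+) : ℂ :=
  if Odd (i : ℕ) ∧ (i : ℕ) + (j : ℕ) = (l : ℕ) + 3 then (1/4) * (j : ℕ) else 0

/-- The modified (residue-constraint) `C`-tensor of the Airy curve. -/
noncomputable def cM (i j l : ℕ+) : ℂ :=
  if Even ((j : ℕ) + (l : ℕ)) ∧ (i : ℕ) = (j : ℕ) + (l : ℕ) + 3 then 1/4 else 0

/-- `S_{g',n'}` with the convention that it is interpreted as `0` when `n' = 0` or
(`g' = 0` and `n' ≤ 2`). -/
noncomputable def SE (S : ℕ → List ℕ+ → ℂ) (g : ℕ) (l : List ℕ+) : ℂ :=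
  if l.length = 0 ∨ (g = 0 ∧ l.length ≤ 2) then 0 else S g l

/-- The subsequence of a list indexed by a set `J` of positions. -/
def subseq {α : Type*} (l : List α) (J : Finset (Fin l.length)) : List α :=
  ((List.finRange l.length).filter (fun p => p ∈ J)).map l.get

/-- `S` is defined by the abstract topological recursion from the tensors `(aT, b, c, epsT)`. -/
def Recur (b c : ℕ+ → ℕ+ → ℕ+ → ℂ) (S : ℕ → List ℕ+ → ℂ) : Prop :=
  (∀ i j l : ℕ+, S 0 [i, j, l] = 2 * aT i j l) ∧
  (∀ i : ℕ+, S 1 [i] = epsT i) ∧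
  (∀ g n : ℕ, ((g = 0 ∧ 4 ≤ n) ∨ (g = 1 ∧ 2 ≤ n) ∨ (2 ≤ g ∧ 1 ≤ n)) →
    ∀ (i : ℕ+) (t : List ℕ+), t.length = n - 1 →
      S g (i :: t)
        = 2 * (∑ α : Fin t.length, ∑ᶠ l : ℕ+,
            b i (t.get α) l * SE S g (l :: t.eraseIdx α))
        + (∑ g₁ ∈ Finset.range (g + 1), ∑ J : Finset (Fin t.length), ∑ᶠ j : ℕ+, ∑ᶠ l : ℕ+,
            c i j l * SE S g₁ (j :: subseq t J) * SE S (g - g₁) (l :: subseq t Jᶜ))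
        + (if g = 0 then 0 else
            ∑ᶠ j : ℕ+, ∑ᶠ l : ℕ+, c i j l * SE S (g - 1) (j :: l :: t)))

lemma mem_subseq {α : Type*} (l : List α) (J : Finset (Fin l.length)) (a : Fin l.length)
    (h : a ∈ J) : l.get a ∈ subseq l J := by
  simp only [subseq, List.mem_map]
  exact ⟨a, by simp [List.mem_filter, h], rfl⟩

lemma length_subseq_add {α : Type*} (l : List α) (J : Finset (Fin l.length)) :
    (subseq l J).length + (subseq l Jᶜ).length = l.length := by
  simp only [subseq, List.length_map]
  have h1 := (List.finRange l.length).length_eq_length_filter_add (fun p => p ∈ J)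
  simp only [List.length_finRange] at h1
  have h2 : (List.finRange l.length).filter (fun p => p ∈ Jᶜ)
      = (List.finRange l.length).filter (fun x => !decide (x ∈ J)) := by
    apply List.filter_congr
    intro x _
    simp [Finset.mem_compl]
  rw [h2]
  omega

/-- for either of the two tensor families of the Airy curve, the recursively
defined numbers `S_{g,n; i₁,…,i_n}` vanish whenever some index is even. -/
theorem vanishing_on_even_indices (b c : ℕ+ → ℕ+ → ℕ+ → ℂ)
    (hbc : (b = bTR ∧ c = cTR) ∨ (b = bM ∧ c = cM))
    (S : ℕ → List ℕ+ → ℂ) (hS : Recur b c S) :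
    ∀ (g : ℕ) (l : List ℕ+),
      ((g = 0 ∧ 3 ≤ l.length) ∨ (1 ≤ g ∧ 1 ≤ l.length)) →
      (∃ i ∈ l, Even (i : ℕ)) → S g l = 0 := by
  have hb : ∀ i j l : ℕ+, b i j l ≠ 0 →
      Odd (i : ℕ) ∧ (i : ℕ) + (j : ℕ) = (l : ℕ) + 3 := by
    intro i j l h
    by_contra hcon
    rcases hbc with ⟨rfl, -⟩ | ⟨rfl, -⟩
    · exact h (if_neg hcon)
    · exact h (if_neg hcon)
  have hcs : ∀ i j l : ℕ+, c i j l ≠ 0 →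
      Even ((j : ℕ) + (l : ℕ)) ∧ (i : ℕ) = (j : ℕ) + (l : ℕ) + 3 := by
    intro i j l h
    by_contra hcon
    rcases hbc with ⟨-, rfl⟩ | ⟨-, rfl⟩
    · exact h (if_neg hcon)
    · exact h (if_neg hcon)
  obtain ⟨hS3, hS1, hSrec⟩ := hS
  suffices H : ∀ m g (l : List ℕ+), 2 * g + l.length ≤ m →
      ((g = 0 ∧ 3 ≤ l.length) ∨ (1 ≤ g ∧ 1 ≤ l.length)) →
      (∃ i ∈ l, Even (i : ℕ)) → S g l = 0 by
    exact fun g l h1 h2 => H (2 * g + l.length) g l le_rfl h1 h2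
  intro m
  induction m using Nat.strong_induction_on with
  | _ m IH =>
  intro g l hm hrange heven
  have SEsmall : ∀ g' (l' : List ℕ+), 2 * g' + l'.length ≤ 2 → SE S g' l' = 0 := by
    intro g' l' h
    unfold SE
    rw [if_pos]
    rcases Nat.eq_zero_or_pos l'.length with h0 | h0
    · exact Or.inl h0
    · exact Or.inr ⟨by omega, by omega⟩
  have SE0 : ∀ g' (l' : List ℕ+), 2 * g' + l'.length < m →
      (∃ i ∈ l', Even (i : ℕ)) → SE S g' l' = 0 := by
    intro g' l' h hev
    unfold SE
    split
    · rfl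
    · rename_i hcond
      push_neg at hcond
      obtain ⟨h1, h2⟩ := hcond
      apply IH _ h g' l' le_rfl _ hev
      rcases Nat.eq_zero_or_pos g' with rfl | hg
      · exact Or.inl ⟨rfl, by have := h2 rfl; omega⟩
      · exact Or.inr ⟨hg, by omega⟩
  obtain ⟨x, hx, hxe⟩ := heven
  obtain ⟨i, t, rfl⟩ : ∃ i t, l = i :: t := by
    cases l with
    | nil => simp at hrange
    | cons a t => exact ⟨a, t, rfl⟩
  have hm' : 2 * g + (t.length + 1) ≤ m := by simpa using hm
  have hxit : x = i ∨ x ∈ t := by simpa using hx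
  by_cases hbase0 : g = 0 ∧ t.length = 2
  · obtain ⟨rfl, ht2⟩ := hbase0
    obtain ⟨j, k, rfl⟩ := List.length_eq_two.mp ht2
    rw [hS3]
    suffices h : aT i j k = 0 by rw [h, mul_zero]
    unfold aT
    rw [if_neg]
    rintro ⟨rfl, rfl, rfl⟩
    have : x = 1 := by simpa using hx
    subst this
    simp at hxe
  by_cases hbase1 : g = 1 ∧ t = []
  · obtain ⟨rfl, rfl⟩ := hbase1
    rw [hS1]
    unfold epsT
    rw [if_neg]
    rintro rfl
    simp at hx
    subst hx
    exact absurd hxe (by decide)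
  -- recursion case
  have hbranch : (g = 0 ∧ 4 ≤ t.length + 1) ∨ (g = 1 ∧ 2 ≤ t.length + 1) ∨
      (2 ≤ g ∧ 1 ≤ t.length + 1) := by
    have ht1 : ¬(g = 1 ∧ t.length = 0) := fun h =>
      hbase1 ⟨h.1, List.length_eq_zero_iff.mp h.2⟩
    simp only [List.length_cons] at hrange
    omega
  rw [hSrec g (t.length + 1) hbranch i t (by omega)]
  have hB : ∀ α : Fin t.length,
      ∑ᶠ l' : ℕ+, b i (t.get α) l' * SE S g (l' :: t.eraseIdx (α : ℕ)) = 0 := by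
    intro α
    apply finsum_eq_zero_of_forall_eq_zero
    intro l'
    by_cases hb0 : b i (t.get α) l' = 0
    · rw [hb0, zero_mul]
    obtain ⟨hio, hsum⟩ := hb i _ l' hb0
    have hlen : (t.eraseIdx (α : ℕ)).length = t.length - 1 :=
      List.length_eraseIdx_of_lt α.isLt
    rcases hxit with rfl | hxt
    · exact absurd hio (by simpa [Nat.not_odd_iff_even] using hxe)
    · obtain ⟨α₀, hα₀⟩ := List.mem_iff_get.mp hxt
      by_cases hαα : α = α₀
      · subst hαα
        rw [hα₀] at hsum
        have hle : Even (l' : ℕ) := by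
          rw [Nat.even_iff] at hxe ⊢
          rw [Nat.odd_iff] at hio
          omega
        rw [SE0 g _ (by rw [List.length_cons, hlen]; have := α.isLt; omega)
          ⟨l', List.mem_cons_self, hle⟩, mul_zero]
      · have hxm : x ∈ t.eraseIdx (α : ℕ) :=
          List.mem_eraseIdx_iff_getElem.mpr
            ⟨α₀, α₀.isLt, fun h => hαα (Fin.ext h.symm), by simpa using hα₀⟩
        rw [SE0 g _ (by rw [List.length_cons, hlen]; have := α.isLt; omega)
          ⟨x, List.mem_cons_of_mem _ hxm, hxe⟩, mul_zero]
  have hC : ∀ g₁ ∈ Finset.range (g + 1), ∀ J : Finset (Fin t.length),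
      (∑ᶠ j : ℕ+, ∑ᶠ l' : ℕ+,
        c i j l' * SE S g₁ (j :: subseq t J) * SE S (g - g₁) (l' :: subseq t Jᶜ)) = 0 := by
    intro g₁ hg₁ J
    have hg₁' : g₁ ≤ g := by simp at hg₁; omega
    apply finsum_eq_zero_of_forall_eq_zero
    intro j
    apply finsum_eq_zero_of_forall_eq_zero
    intro l'
    by_cases hc0 : c i j l' = 0
    · rw [hc0, zero_mul, zero_mul]
    obtain ⟨hev, hisum⟩ := hcs i j l' hc0
    have hio : Odd (i : ℕ) := by
      rw [Nat.even_iff] at hev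
      rw [Nat.odd_iff]
      omega
    rcases hxit with rfl | hxt
    · exact absurd hio (by simpa [Nat.not_odd_iff_even] using hxe)
    obtain ⟨α₀, hα₀⟩ := List.mem_iff_get.mp hxt
    have hnn := length_subseq_add t J
    by_cases hJ : α₀ ∈ J
    · have hxin : x ∈ subseq t J := hα₀ ▸ mem_subseq t J α₀ hJ
      by_cases hsm : 2 * g₁ + ((subseq t J).length + 1) < m
      · rw [SE0 g₁ _ (by rw [List.length_cons]; omega)
          ⟨x, List.mem_cons_of_mem _ hxin, hxe⟩, mul_zero, zero_mul]
      · rw [SEsmall (g - g₁) _ (by rw [List.length_cons]; omega), mul_zero]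
    · have hxin : x ∈ subseq t Jᶜ := hα₀ ▸ mem_subseq t Jᶜ α₀ (Finset.mem_compl.mpr hJ)
      by_cases hsm : 2 * (g - g₁) + ((subseq t Jᶜ).length + 1) < m
      · rw [SE0 (g - g₁) _ (by rw [List.length_cons]; omega)
          ⟨x, List.mem_cons_of_mem _ hxin, hxe⟩, mul_zero]
      · rw [SEsmall g₁ _ (by rw [List.length_cons]; omega), mul_zero, zero_mul]
  have hD : (if g = 0 then (0 : ℂ) else
      ∑ᶠ j : ℕ+, ∑ᶠ l' : ℕ+, c i j l' * SE S (g - 1) (j :: l' :: t)) = 0 := by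
    split
    · rfl
    · rename_i hg0
      apply finsum_eq_zero_of_forall_eq_zero
      intro j
      apply finsum_eq_zero_of_forall_eq_zero
      intro l'
      by_cases hc0 : c i j l' = 0
      · rw [hc0, zero_mul]
      obtain ⟨hev, hisum⟩ := hcs i j l' hc0
      have hio : Odd (i : ℕ) := by
        rw [Nat.even_iff] at hev
        rw [Nat.odd_iff]
        omega
      rcases hxit with rfl | hxt
      · exact absurd hio (by simpa [Nat.not_odd_iff_even] using hxe)
      · rw [SE0 (g - 1) _ (by simp only [List.length_cons]; omega)
          ⟨x, by simp [hxt], hxe⟩, mul_zero]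
  rw [Finset.sum_eq_zero fun α _ => hB α,
    Finset.sum_eq_zero fun g₁ hg₁ => Finset.sum_eq_zero fun J _ => hC g₁ hg₁ J, hD]
  ring

end Airy
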